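/- arXiv:1605.08599 — 2 statements merged into one kernel-verified Lean document; each statement's English description precedes it below -/
import Mathlib

section
/- Let G be an abelian group (written additively) viewed as a ℤ-module, let F = {g_1, …, g_l} ⊆ G be a finite set such that m·f ≠ 0 for every nonzero f ∈ F ∪ (F − F) and every m ∈ ℕ, and let K ∈ ℕ. Then there exist a finite set Q ⊆ G and an integer M ≥ 1 such that for every coloring k: G → {1, …, K}, there are g' ∈ Q and m ∈ {1, …, M} with k(g' + m g_1) = k(g' + m g_2) = ⋯ = k(g' + m g_l). -/
open Set
open scoped Pointwise

theorem stmt5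
    {G : Type*} [AddCommGroup G] (l : ℕ) (g : Fin l → G)
    (hirr : ∀ f ∈ Set.range g ∪ (Set.range g - Set.range g), f ≠ 0 →
      ∀ m : ℕ, 0 < m → m • f ≠ 0)
    (K : ℕ) :
    ∃ (Q : Finset G) (M : ℕ), 1 ≤ M ∧ ∀ k : G → Fin K,
      ∃ g' ∈ Q, ∃ m : ℕ, 1 ≤ m ∧ m ≤ M ∧
        ∀ i j : Fin l, k (g' + m • g i) = k (g' + m • g j) := by
  classical
  rcases Nat.eq_zero_or_pos K with hK | hK
  · subst hK
    exact ⟨{0}, 1, le_refl _, fun k => (k 0).elim0⟩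
  by_contra hcon
  push_neg at hcon
  letI : TopologicalSpace (Fin K) := ⊥
  haveI : DiscreteTopology (Fin K) := ⟨rfl⟩
  set Z : Finset G × ℕ → Set (G → Fin K) := fun p =>
    {k | ∀ g' ∈ p.1, ∀ m : ℕ, 1 ≤ m → m ≤ p.2 + 1 →
      ∃ i j : Fin l, k (g' + m • g i) ≠ k (g' + m • g j)} with hZ
  have hne : ∀ p, (Z p).Nonempty := by
    intro p
    obtain ⟨k, hk⟩ := hcon p.1 (p.2 + 1) (by omega)
    exact ⟨k, hk⟩
  have hcl : ∀ p, IsClosed (Z p) := by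
    intro p
    have : Z p = ⋂ g' ∈ (p.1 : Set G), ⋂ m ∈ Set.Icc 1 (p.2 + 1),
        ⋃ i : Fin l, ⋃ j : Fin l,
          (fun k : G → Fin K => (k (g' + m • g i), k (g' + m • g j))) ⁻¹'
            {q : Fin K × Fin K | q.1 ≠ q.2} := by
      ext k
      simp only [hZ, Set.mem_iInter, Set.mem_setOf_eq, Set.mem_preimage, Set.mem_iUnion,
        Finset.mem_coe, Set.mem_Icc]
      tauto
    rw [this]
    refine isClosed_biInter fun g' _ => isClosed_biInter fun m _ => ?_
    refine isClosed_iUnion_of_finite fun i => isClosed_iUnion_of_finite fun j => ?_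
    exact IsClosed.preimage
      (Continuous.prodMk (continuous_apply _) (continuous_apply _))
      (isClosed_discrete _)
  have hdir : Directed (· ⊇ ·) Z := by
    intro p q
    refine ⟨⟨p.1 ∪ q.1, max p.2 q.2⟩, ?_, ?_⟩ <;>
    · intro k hk g' hg' m h1 h2
      refine hk g' ?_ m h1 ?_
      · simp [Finset.mem_union, hg']
      · omega
  obtain ⟨k₀, hk₀⟩ := IsCompact.nonempty_iInter_of_directed_nonempty_isCompact_isClosed
    Z hdir hne (fun p => (hcl p).isCompact) hcl
  simp only [Set.mem_iInter] at hk₀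
  obtain ⟨a, ha, b, c, hmono⟩ :=
    Combinatorics.exists_mono_homothetic_copy (Finset.image g Finset.univ) k₀
  obtain ⟨i, j, hij⟩ := hk₀ ⟨{b}, a⟩ b (by simp) a ha (by omega)
  apply hij
  rw [add_comm b (a • g i), add_comm b (a • g j),
    hmono (g i) (by simp), hmono (g j) (by simp)]
end

section
/- Let G be a countable abelian group and F = {g_1, …, g_l} ⊆ G a finite subset. For any K ∈ ℕ and any finite coloring k: G → {1, …, K}, there exist g_0 ∈ G and a nonzero integer r such that k(g_0 + r g_1) = k(g_0 + r g_2) = ⋯ = k(g_0 + r g_l). -/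
theorem stmt6
    {G : Type*} [AddCommGroup G] [Countable G] (l : ℕ) (g : Fin l → G)
    (htf : ∀ x ∈ AddSubgroup.closure (Set.range g), x ≠ 0 → ∀ r : ℤ, r ≠ 0 → r • x ≠ 0)
    (K : ℕ) (k : G → Fin K) :
    ∃ (g₀ : G) (r : ℤ), r ≠ 0 ∧ ∀ i j : Fin l, k (g₀ + r • g i) = k (g₀ + r • g j) := by
  classical
  obtain ⟨a, ha, b, c, hc⟩ :=
    Combinatorics.exists_mono_homothetic_copy (Finset.univ.image g) k
  refine ⟨b, (a : ℤ), by exact_mod_cast ha.ne', fun i j => ?_⟩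
  have hi := hc (g i) (Finset.mem_image_of_mem g (Finset.mem_univ i))
  have hj := hc (g j) (Finset.mem_image_of_mem g (Finset.mem_univ j))
  simp only [natCast_zsmul, add_comm b]
  rw [hi, hj]
end
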